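/- Let G be a closed subgroup of O(n) such that every G-invariant convex body in R^n is a Euclidean ball centered at the origin. Then G acts transitively on the unit sphere S^{n-1}. -/

import Mathlib

open scoped RealInnerProductSpace Pointwise

/-- The action of an orthogonal matrix on Euclidean space. -/
noncomputable def act {n : ℕ} (g : Matrix.orthogonalGroup (Fin n) ℝ)
    (x : EuclideanSpace ℝ (Fin n)) : EuclideanSpace ℝ (Fin n) :=
  Matrix.toEuclideanLin (g : Matrix (Fin n) (Fin n) ℝ) x

section MyAux
open Matrix

variable {n : ℕ}

lemma act_mul (g h : Matrix.orthogonalGroup (Fin n) ℝ) (x : EuclideanSpace ℝ (Fin n)) :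
    act (g * h) x = act g (act h x) := by
  simp [act, Matrix.toEuclideanLin_apply, Matrix.mulVec_mulVec]

lemma act_one (x : EuclideanSpace ℝ (Fin n)) : act (1 : Matrix.orthogonalGroup (Fin n) ℝ) x = x := by
  simp [act, Matrix.toEuclideanLin_apply]

lemma act_inner (g : Matrix.orthogonalGroup (Fin n) ℝ) (x y : EuclideanSpace ℝ (Fin n)) :
    ⟪act g x, act g y⟫ = ⟪x, y⟫ := by
  have hg : (g : Matrix (Fin n) (Fin n) ℝ)ᵀ * (g : Matrix (Fin n) (Fin n) ℝ) = 1 := by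
    have := g.2
    rw [Unitary.mem_iff] at this
    simpa [Matrix.star_eq_conjTranspose] using this.1
  simp only [act, Matrix.toEuclideanLin_apply, EuclideanSpace.inner_eq_star_dotProduct]
  simp only [star_trivial, WithLp.ofLp_toLp]
  rw [dotProduct_comm, dotProduct_comm (WithLp.ofLp y)]
  rw [Matrix.dotProduct_mulVec, ← Matrix.vecMul_transpose, Matrix.vecMul_vecMul, hg,
    Matrix.vecMul_one]

end MyAux

lemma act_norm (g : Matrix.orthogonalGroup (Fin n) ℝ) (x : EuclideanSpace ℝ (Fin n)) :
    ‖act g x‖ = ‖x‖ := by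
  have := act_inner g x x
  rw [real_inner_self_eq_norm_sq, real_inner_self_eq_norm_sq] at this
  have h0 : (0:ℝ) ≤ ‖act g x‖ := norm_nonneg _
  nlinarith [norm_nonneg x]

/-- `act g` as a linear isometry equivalence. -/
noncomputable def actLi (g : Matrix.orthogonalGroup (Fin n) ℝ) :
    EuclideanSpace ℝ (Fin n) ≃ₗᵢ[ℝ] EuclideanSpace ℝ (Fin n) where
  toLinearEquiv := LinearEquiv.ofLinear
    (Matrix.toEuclideanLin (g : Matrix (Fin n) (Fin n) ℝ))
    (Matrix.toEuclideanLin ((g⁻¹ : Matrix.orthogonalGroup (Fin n) ℝ) : Matrix (Fin n) (Fin n) ℝ))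
    (by
      apply LinearMap.ext; intro x
      have : act g (act g⁻¹ x) = x := by rw [← act_mul, mul_inv_cancel, act_one]
      exact this)
    (by
      apply LinearMap.ext; intro x
      have : act g⁻¹ (act g x) = x := by rw [← act_mul, inv_mul_cancel, act_one]
      exact this)
  norm_map' := act_norm g

lemma actLi_coe (g : Matrix.orthogonalGroup (Fin n) ℝ) : ⇑(actLi g) = act g := rfl

lemma isCompact_orthogonalGroup :
    IsCompact ((Matrix.orthogonalGroup (Fin n) ℝ : Submonoid _) : Set (Matrix (Fin n) (Fin n) ℝ)) := by
  have hsub : ((Matrix.orthogonalGroup (Fin n) ℝ : Submonoid _) : Set (Matrix (Fin n) (Fin n) ℝ)) ⊆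
      {A : Matrix (Fin n) (Fin n) ℝ | ∀ i j, A i j ∈ Set.Icc (-1:ℝ) 1} := by
    intro A hA i j
    have := entry_norm_bound_of_unitary (𝕜 := ℝ) hA i j
    rw [Real.norm_eq_abs] at this
    exact abs_le.mp this
  have hcpt : IsCompact {A : Matrix (Fin n) (Fin n) ℝ | ∀ i j, A i j ∈ Set.Icc (-1:ℝ) 1} := by
    have h := isCompact_univ_pi (ι := Fin n) fun _ =>
      isCompact_univ_pi (ι := Fin n) fun _ => (isCompact_Icc (a := (-1:ℝ)) (b := 1))
    have heq : {A : Matrix (Fin n) (Fin n) ℝ | ∀ i j, A i j ∈ Set.Icc (-1:ℝ) 1} =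
        (Set.univ.pi fun _ : Fin n => Set.univ.pi fun _ : Fin n => Set.Icc (-1:ℝ) 1) := by
      ext A
      constructor
      · intro hA
        intro i _
        intro j _
        exact hA i j
      · intro hA i j
        exact hA i (Set.mem_univ i) j (Set.mem_univ j)
    rw [heq]
    exact h
  have hcl : IsClosed ((Matrix.orthogonalGroup (Fin n) ℝ : Submonoid _) :
      Set (Matrix (Fin n) (Fin n) ℝ)) := by
    have : ((Matrix.orthogonalGroup (Fin n) ℝ : Submonoid _) : Set (Matrix (Fin n) (Fin n) ℝ)) =
        (fun A : Matrix (Fin n) (Fin n) ℝ => A * star A) ⁻¹' {1} := by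
      ext A
      simp [Matrix.mem_unitaryGroup_iff]
    rw [this]
    exact isClosed_singleton.preimage (continuous_id.matrix_mul continuous_star)
  exact hcpt.of_isClosed_subset hcl hsub

instance : CompactSpace (Matrix.orthogonalGroup (Fin n) ℝ) :=
  isCompact_iff_compactSpace.mp isCompact_orthogonalGroup

lemma continuous_act_apply (v : EuclideanSpace ℝ (Fin n)) :
    Continuous fun g : Matrix.orthogonalGroup (Fin n) ℝ => act g v := by
  have hlin : IsLinearMap ℝ
      (fun A : Matrix (Fin n) (Fin n) ℝ => Matrix.toEuclideanLin (𝕜 := ℝ) A v) :=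
    ⟨fun A B => by simp, fun c A => by simp⟩
  have hc : Continuous (fun A : Matrix (Fin n) (Fin n) ℝ => Matrix.toEuclideanLin (𝕜 := ℝ) A v) :=
    (IsLinearMap.mk' _ hlin).continuous_of_finiteDimensional
  exact hc.comp continuous_subtype_val

lemma mem_of_norm_one_mem_closure_convexHull {E : Type*} [NormedAddCommGroup E]
    [InnerProductSpace ℝ E] {s : Set E} (hs : IsCompact s) (hne : s.Nonempty)
    (hb : ∀ z ∈ s, ‖z‖ ≤ 1) {u : E} (hu : ‖u‖ = 1)
    (humem : u ∈ closure (convexHull ℝ s)) : u ∈ s := by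
  obtain ⟨z, hzs, hzmax⟩ := hs.exists_isMaxOn hne ((innerSL ℝ u).continuous.continuousOn)
  have hsH : s ⊆ {x | ⟪u, x⟫ ≤ ⟪u, z⟫} := fun x hx => hzmax hx
  have hconv : Convex ℝ {x : E | ⟪u, x⟫ ≤ ⟪u, z⟫} :=
    convex_halfSpace_le ⟨fun a b => inner_add_right u a b, fun c a => real_inner_smul_right u a c⟩ _
  have hclosed : IsClosed {x : E | ⟪u, x⟫ ≤ ⟪u, z⟫} :=
    isClosed_le (innerSL ℝ u).continuous continuous_const
  have hKH : closure (convexHull ℝ s) ⊆ {x | ⟪u, x⟫ ≤ ⟪u, z⟫} :=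
    closure_minimal (convexHull_min hsH hconv) hclosed
  have h1 : (1:ℝ) ≤ ⟪u, z⟫ := by
    have := hKH humem
    rw [Set.mem_setOf_eq, real_inner_self_eq_norm_sq, hu] at this
    linarith
  have h2 : ⟪u, z⟫ ≤ 1 := by
    calc ⟪u, z⟫ ≤ ‖u‖ * ‖z‖ := real_inner_le_norm u z
    _ ≤ 1 := by rw [hu, one_mul]; exact hb z hzs
  have hz1 : ‖z‖ ≤ 1 := hb z hzs
  have hsq : ‖u - z‖ ^ 2 ≤ 0 := by
    rw [norm_sub_sq_real, hu]
    nlinarith [norm_nonneg z]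
  have : u - z = 0 := by
    have h0 : ‖u - z‖ = 0 := le_antisymm (by nlinarith [norm_nonneg (u - z)]) (norm_nonneg _)
    exact norm_eq_zero.mp h0
  rw [sub_eq_zero] at this
  rw [this]
  exact hzs

/-- If G is a closed subgroup of O(n) such that every G-invariant convex body is a
Euclidean ball centered at the origin, then G acts transitively on the unit sphere. -/
theorem stmt1 {n : ℕ} (G : Subgroup (Matrix.orthogonalGroup (Fin n) ℝ))
    (hGcl : IsClosed (G : Set (Matrix.orthogonalGroup (Fin n) ℝ)))
    (hball : ∀ K : Set (EuclideanSpace ℝ (Fin n)), IsCompact K → Convex ℝ K →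
      (interior K).Nonempty → (∀ g ∈ G, act g '' K = K) →
      ∃ r > 0, K = Metric.closedBall (0 : EuclideanSpace ℝ (Fin n)) r) :
    ∀ u v : EuclideanSpace ℝ (Fin n), ‖u‖ = 1 → ‖v‖ = 1 → ∃ g ∈ G, act g u = v := by
  intro u v hu hv
  set orb : Set (EuclideanSpace ℝ (Fin n)) :=
    (fun g : Matrix.orthogonalGroup (Fin n) ℝ => act g v) '' (G : Set _) with horb
  set S := Metric.closedBall (0 : EuclideanSpace ℝ (Fin n)) 2⁻¹ ∪ orb with hSdef
  set K := closure (convexHull ℝ S) with hKdef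
  have hGc : IsCompact (G : Set (Matrix.orthogonalGroup (Fin n) ℝ)) := hGcl.isCompact
  have horbc : IsCompact orb := hGc.image (continuous_act_apply v)
  have hScomp : IsCompact S := (isCompact_closedBall _ _).union horbc
  have hSball : S ⊆ Metric.closedBall 0 1 := by
    rintro x (hx | ⟨g, hg, rfl⟩)
    · exact Metric.closedBall_subset_closedBall (by norm_num) hx
    · rw [mem_closedBall_zero_iff, act_norm, hv]
  have hKball : K ⊆ Metric.closedBall 0 1 :=
    closure_minimal (convexHull_min hSball (convex_closedBall _ _)) Metric.isClosed_closedBall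
  have hKcomp : IsCompact K :=
    (isCompact_closedBall (0 : EuclideanSpace ℝ (Fin n)) 1).of_isClosed_subset
      isClosed_closure hKball
  have hKconv : Convex ℝ K := (convex_convexHull ℝ S).closure
  have hvS : v ∈ S := Or.inr ⟨1, G.one_mem, act_one v⟩
  have hSK : S ⊆ K := (subset_convexHull ℝ S).trans subset_closure
  have hKint : (interior K).Nonempty := by
    have h1 : Metric.ball (0 : EuclideanSpace ℝ (Fin n)) 2⁻¹ ⊆ interior K := by
      rw [← interior_closedBall (0 : EuclideanSpace ℝ (Fin n))
        (by norm_num : ((2:ℝ)⁻¹) ≠ 0)]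
      exact interior_mono ((Set.subset_union_left).trans hSK)
    exact (Metric.nonempty_ball.mpr (by norm_num)).mono h1
  have hinv : ∀ g ∈ G, act g '' K = K := by
    intro g hg
    have hball' : act g '' Metric.closedBall (0 : EuclideanSpace ℝ (Fin n)) 2⁻¹ =
        Metric.closedBall 0 2⁻¹ := by
      ext x
      simp only [Set.mem_image, mem_closedBall_zero_iff]
      constructor
      · rintro ⟨y, hy, rfl⟩
        rwa [act_norm]
      · intro hx
        exact ⟨act g⁻¹ x, by rwa [act_norm], by rw [← act_mul, mul_inv_cancel, act_one]⟩
    have horbim : act g '' orb = orb := by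
      ext x
      constructor
      · rintro ⟨-, ⟨h, hh, rfl⟩, rfl⟩
        exact ⟨g * h, G.mul_mem hg hh, by change act (g * h) v = act g (act h v); exact act_mul g h v⟩
      · rintro ⟨h, hh, rfl⟩
        refine ⟨act (g⁻¹ * h) v, ⟨g⁻¹ * h, G.mul_mem (G.inv_mem hg) hh, rfl⟩, ?_⟩
        rw [← act_mul, ← mul_assoc, mul_inv_cancel, one_mul]
    have hSim : act g '' S = S := by
      rw [hSdef, Set.image_union, hball', horbim]
    calc act g '' K = (actLi g) '' closure (convexHull ℝ S) := by rw [actLi_coe, hKdef]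
      _ = closure ((actLi g) '' convexHull ℝ S) :=
        ((actLi g).toHomeomorph.image_closure _)
      _ = closure (convexHull ℝ ((actLi g) '' S)) := by
        rw [show ((actLi g) '' convexHull ℝ S) = convexHull ℝ ((actLi g) '' S) from
          (actLi g).toLinearEquiv.toLinearMap.image_convexHull S]
      _ = K := by rw [actLi_coe, hSim, hKdef]
  obtain ⟨r, hr0, hKr⟩ := hball K hKcomp hKconv hKint hinv
  have hvK : v ∈ K := hSK hvS
  have h1r : (1:ℝ) ≤ r := by
    rw [hKr, mem_closedBall_zero_iff, hv] at hvK
    exact hvK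
  have hr1 : r ≤ 1 := by
    have hrv : r • v ∈ K := by
      rw [hKr, mem_closedBall_zero_iff, norm_smul, hv, mul_one, Real.norm_eq_abs,
        abs_of_pos hr0]
    have := hKball hrv
    rwa [mem_closedBall_zero_iff, norm_smul, hv, mul_one, Real.norm_eq_abs,
      abs_of_pos hr0] at this
  have hr : r = 1 := le_antisymm hr1 h1r
  have huK : u ∈ K := by
    rw [hKr, hr, mem_closedBall_zero_iff, hu]
  have huS : u ∈ S := mem_of_norm_one_mem_closure_convexHull hScomp ⟨v, hvS⟩
    (fun z hz => mem_closedBall_zero_iff.mp (hSball hz)) hu huK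
  rcases huS with hx | ⟨g, hg, hgv⟩
  · rw [mem_closedBall_zero_iff, hu] at hx
    norm_num at hx
  · exact ⟨g⁻¹, G.inv_mem hg, by rw [← hgv, ← act_mul, inv_mul_cancel, act_one]⟩
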